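/- Let H, K be finite-dimensional complex Hilbert spaces, T : H → K any map, and suppose the map sending the rank-one operator (f,·)f to (Tf,·)(Tf) is the restriction of a linear map W : L(H) → L(K). Then there exists a positive operator L on H such that ‖Tf‖² = (f, Lf) for all f ∈ H. -/

import Mathlib

open scoped ComplexConjugate

/-- The rank-one operator `(e,·)e : f ↦ ⟪e, f⟫ e`. -/
noncomputable def rankOne {H : Type*} [NormedAddCommGroup H] [InnerProductSpace ℂ H]
    (e : H) : H →ₗ[ℂ] H where
  toFun f := (inner ℂ e f : ℂ) • e
  map_add' x y := by simp [inner_add_right, add_smul]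
  map_smul' c x := by simp [inner_smul_right, smul_smul]

/-- A positive operator: `⟪f, D f⟫ ≥ 0` (in particular real) for all `f`. -/
def IsPosOp {H : Type*} [NormedAddCommGroup H] [InnerProductSpace ℂ H]
    (D : H →ₗ[ℂ] H) : Prop :=
  ∀ f : H, 0 ≤ (inner ℂ f (D f) : ℂ).re ∧ (inner ℂ f (D f) : ℂ).im = 0

/-- The rank-one operator `h ↦ ⟪f, h⟫ • g`, sesquilinear in `(f, g)`. -/
noncomputable def Sop {H : Type*} [NormedAddCommGroup H] [InnerProductSpace ℂ H]
    (f g : H) : H →ₗ[ℂ] H where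
  toFun h := (inner ℂ f h : ℂ) • g
  map_add' x y := by simp [inner_add_right, add_smul]
  map_smul' c x := by simp [inner_smul_right, smul_smul]

lemma Sop_self {H : Type*} [NormedAddCommGroup H] [InnerProductSpace ℂ H]
    (f : H) : Sop f f = rankOne f := rfl

lemma Sop_add_right {H : Type*} [NormedAddCommGroup H] [InnerProductSpace ℂ H]
    (f g g' : H) : Sop f (g + g') = Sop f g + Sop f g' := by
  ext h; simp [Sop, smul_add]

lemma Sop_smul_right {H : Type*} [NormedAddCommGroup H] [InnerProductSpace ℂ H]
    (f : H) (c : ℂ) (g : H) : Sop f (c • g) = c • Sop f g := by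
  ext h; simp [Sop, smul_smul, mul_comm]

lemma Sop_add_left {H : Type*} [NormedAddCommGroup H] [InnerProductSpace ℂ H]
    (f f' g : H) : Sop (f + f') g = Sop f g + Sop f' g := by
  ext h; simp [Sop, inner_add_left, add_smul]

lemma Sop_smul_left {H : Type*} [NormedAddCommGroup H] [InnerProductSpace ℂ H]
    (c : ℂ) (f g : H) : Sop (c • f) g = (conj c) • Sop f g := by
  ext h; simp [Sop, inner_smul_left, smul_smul, mul_comm]

theorem stmt2 {H K : Type*}
    [NormedAddCommGroup H] [InnerProductSpace ℂ H] [FiniteDimensional ℂ H]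
    [NormedAddCommGroup K] [InnerProductSpace ℂ K] [FiniteDimensional ℂ K]
    (T : H → K)
    (hext : ∃ W : (H →ₗ[ℂ] H) →ₗ[ℂ] (K →ₗ[ℂ] K),
      ∀ f : H, W (rankOne f) = rankOne (T f)) :
    ∃ L : H →ₗ[ℂ] H, IsPosOp L ∧ ∀ f : H, (inner ℂ f (L f) : ℂ) = ((‖T f‖ ^ 2 : ℝ) : ℂ) := by
  obtain ⟨W, hW⟩ := hext
  let b := stdOrthonormalBasis ℂ K
  let e := stdOrthonormalBasis ℂ H
  -- the sesquilinear form B f g = Tr (W (Sop f g))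
  set B : H → H → ℂ := fun f g => ∑ j, (inner ℂ (b j) ((W (Sop f g)) (b j)) : ℂ) with hB
  have hBself : ∀ f : H, B f f = ((‖T f‖ ^ 2 : ℝ) : ℂ) := by
    intro f
    have : B f f = ∑ j, (inner ℂ (b j) ((rankOne (T f)) (b j)) : ℂ) := by
      rw [hB]; simp only [Sop_self, hW]
    rw [this]
    have h2 : ∀ j, (inner ℂ (b j) ((rankOne (T f)) (b j)) : ℂ)
        = (inner ℂ (T f) (b j) : ℂ) * (inner ℂ (b j) (T f) : ℂ) := by
      intro j; simp [rankOne, inner_smul_right]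
    simp only [h2]
    rw [b.sum_inner_mul_inner (T f) (T f)]
    rw [inner_self_eq_norm_sq_to_K]
    norm_cast
  have hBaddr : ∀ f g g', B f (g + g') = B f g + B f g' := by
    intro f g g'
    simp only [hB, Sop_add_right, map_add, LinearMap.add_apply, inner_add_right,
      Finset.sum_add_distrib]
  have hBsmulr : ∀ f (c : ℂ) g, B f (c • g) = c * B f g := by
    intro f c g
    simp only [hB, Sop_smul_right, map_smul, LinearMap.smul_apply, inner_smul_right,
      Finset.mul_sum]
  have hBaddl : ∀ f f' g, B (f + f') g = B f g + B f' g := by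
    intro f f' g
    simp only [hB, Sop_add_left, map_add, LinearMap.add_apply, inner_add_right,
      Finset.sum_add_distrib]
  have hBsmull : ∀ (c : ℂ) f g, B (c • f) g = conj c * B f g := by
    intro c f g
    simp only [hB, Sop_smul_left, map_smul, LinearMap.smul_apply, inner_smul_right,
      Finset.mul_sum]
  -- Define L
  set Lfun : H → H := fun g => ∑ i, B (e i) g • e i with hLfun
  have key : ∀ f g : H, (inner ℂ f (Lfun g) : ℂ) = B f g := by
    intro f g
    classical
    have expand : ∀ s : Finset (Fin (Module.finrank ℂ H)),
        B (∑ i ∈ s, (inner ℂ (e i) f : ℂ) • e i) g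
          = ∑ i ∈ s, conj (inner ℂ (e i) f : ℂ) * B (e i) g := by
      intro s
      induction s using Finset.induction with
      | empty =>
        have := hBsmull 0 0 g
        simpa using this
      | insert _ _ hx ih =>
        rw [Finset.sum_insert hx, hBaddl, hBsmull, ih, Finset.sum_insert hx]
    have hf : (∑ i, (inner ℂ (e i) f : ℂ) • e i) = f := e.sum_repr' f
    calc (inner ℂ f (Lfun g) : ℂ)
        = ∑ i, B (e i) g * (inner ℂ f (e i) : ℂ) := by
          simp [hLfun, inner_sum, inner_smul_right]
      _ = ∑ i, conj (inner ℂ (e i) f : ℂ) * B (e i) g := by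
          refine Finset.sum_congr rfl fun i _ => ?_
          rw [← inner_conj_symm f (e i), mul_comm]
      _ = B (∑ i, (inner ℂ (e i) f : ℂ) • e i) g := (expand Finset.univ).symm
      _ = B f g := by rw [hf]
  refine ⟨{ toFun := Lfun
            map_add' := ?_
            map_smul' := ?_ }, ?_, ?_⟩
  · intro g g'; simp only [hLfun, hBaddr, add_smul, Finset.sum_add_distrib]
  · intro c g; simp only [hLfun, hBsmulr, RingHom.id_apply, Finset.smul_sum, smul_smul]
  · intro f
    have h := key f f
    simp only [LinearMap.coe_mk, AddHom.coe_mk]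
    rw [h, hBself]
    refine ⟨?_, by simp [pow_two, Complex.mul_im]⟩
    simp only [Complex.ofReal_re]
    positivity
  · intro f
    have h := key f f
    simp only [LinearMap.coe_mk, AddHom.coe_mk]
    rw [h, hBself]
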